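/- Let (W_m)_{m≥0} be 3×3 matrices of complex polynomials with deg W_m = m and invertible leading coefficient, and set ℬ_n = (W_{2n}; W_{2n+1}) (6×3 matrix polynomials). Let μ^1, μ^2 : ℕ → M_3(ℂ) be moment sequences with associated matrix moment functionals M^1, M^2, and define the 6×6 matrix 𝔐(x^k ℬ_n) with 3×3 blocks [[M^1(x^k W_{2n}), M^2(x^k W_{2n})], [M^1(x^k W_{2n+1}), M^2(x^k W_{2n+1})]]. Assume 𝔐(x^k ℬ_n) = 0 for all 0 ≤ k < n and that Ω_n := 𝔐(x^n ℬ_n) is invertible for every n ≥ 0. Then there exist 6×6 complex matrices A_n, B_n, C_n such that (with ℬ_{-1} = 0) x·ℬ_n = A_n·ℬ_{n+1} + B_n·ℬ_n + C_n·ℬ_{n-1} for all n ≥ 0, and C_n = Ω_n·Ω_{n-1}^{-1} is invertible for every n ≥ 1. -/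

import Mathlib

open Polynomial

/-- The matrix moment functional associated with a sequence `μ : ℕ → M₃(ℂ)` of
moments: it sends the 3×3 matrix polynomial `W(x) = ∑ₖ Wₖ xᵏ` to `∑ₖ Wₖ · μ k`. -/
noncomputable def matMom (μ : ℕ → Matrix (Fin 3) (Fin 3) ℂ)
    (W : Matrix (Fin 3) (Fin 3) (Polynomial ℂ)) : Matrix (Fin 3) (Fin 3) ℂ :=
  ∑ᶠ k : ℕ, (Matrix.of fun i j => (W i j).coeff k) * μ k

/-- The 6×3 matrix polynomial `ℬ n` obtained by stacking `W (2n)` on top of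
`W (2n+1)`. -/
def stack (W : ℕ → Matrix (Fin 3) (Fin 3) (Polynomial ℂ)) (n : ℕ) :
    Matrix (Fin 3 ⊕ Fin 3) (Fin 3) (Polynomial ℂ) :=
  Matrix.of (Sum.elim (W (2 * n)) (W (2 * n + 1)))

/-- The 6×6 matrix `𝔐(x^k ℬ n)` with 3×3 blocks
`[[M¹(x^k W (2n)), M²(x^k W (2n))], [M¹(x^k W (2n+1)), M²(x^k W (2n+1))]]`. -/
noncomputable def bigM (μ1 μ2 : ℕ → Matrix (Fin 3) (Fin 3) ℂ)
    (W : ℕ → Matrix (Fin 3) (Fin 3) (Polynomial ℂ)) (k n : ℕ) :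
    Matrix (Fin 3 ⊕ Fin 3) (Fin 3 ⊕ Fin 3) ℂ :=
  Matrix.fromBlocks
    (matMom μ1 ((X : ℂ[X]) ^ k • W (2 * n))) (matMom μ2 ((X : ℂ[X]) ^ k • W (2 * n)))
    (matMom μ1 ((X : ℂ[X]) ^ k • W (2 * n + 1))) (matMom μ2 ((X : ℂ[X]) ^ k • W (2 * n + 1)))

/-- Implication (a) ⇒ (b) of the Favard-type Theorem 5.2 of the
paper: if the 3×3 matrix polynomials `W m` (degree `m`, invertible leading
coefficient) are such that the stacked `ℬ n` are orthogonal with respect to the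
vector of matrix moment functionals `(M¹, M²)` — i.e. `𝔐(x^k ℬ n) = 0` for `k < n`
and `Ω n = 𝔐(x^n ℬ n)` is invertible — then the `ℬ n` satisfy a block three-term
recurrence `x·ℬ n = A n·ℬ (n+1) + B n·ℬ n + C n·ℬ (n-1)` with
`C n = Ω n · (Ω (n-1))⁻¹` invertible for `n ≥ 1`. -/
noncomputable def MM (μ1 μ2 : ℕ → Matrix (Fin 3) (Fin 3) ℂ)
    (V : Matrix (Fin 3 ⊕ Fin 3) (Fin 3) (Polynomial ℂ)) :
    Matrix (Fin 3 ⊕ Fin 3) (Fin 3 ⊕ Fin 3) ℂ :=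
  Matrix.fromBlocks
    (matMom μ1 (Matrix.toRows₁ V)) (matMom μ2 (Matrix.toRows₁ V))
    (matMom μ1 (Matrix.toRows₂ V)) (matMom μ2 (Matrix.toRows₂ V))


lemma matMom_support_finite (μ : ℕ → Matrix (Fin 3) (Fin 3) ℂ)
    (P : Matrix (Fin 3) (Fin 3) (Polynomial ℂ)) :
    (Function.support fun k => (Matrix.of fun i j => (P i j).coeff k) * μ k).Finite := by
  apply Set.Finite.subset
    (Set.finite_Iic (Finset.univ.sup fun ij : Fin 3 × Fin 3 => (P ij.1 ij.2).natDegree))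
  intro k hk
  simp only [Function.mem_support] at hk
  by_contra h
  apply hk
  simp only [Set.mem_Iic, not_le] at h
  have hz : (Matrix.of fun i j => (P i j).coeff k) = 0 := by
    ext i j
    apply Polynomial.coeff_eq_zero_of_natDegree_lt
    exact lt_of_le_of_lt
      (Finset.le_sup (f := fun ij : Fin 3 × Fin 3 => (P ij.1 ij.2).natDegree)
        (Finset.mem_univ (i, j))) h
  rw [hz, zero_mul]

lemma matMom_zero (μ : ℕ → Matrix (Fin 3) (Fin 3) ℂ) : matMom μ 0 = 0 := by
  rw [matMom]
  convert finsum_zero with k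
  have : (Matrix.of fun i j => ((0 : Matrix (Fin 3) (Fin 3) (Polynomial ℂ)) i j).coeff k)
      = 0 := by ext i j; simp
  rw [this, zero_mul]

lemma matMom_add (μ : ℕ → Matrix (Fin 3) (Fin 3) ℂ)
    (P Q : Matrix (Fin 3) (Fin 3) (Polynomial ℂ)) :
    matMom μ (P + Q) = matMom μ P + matMom μ Q := by
  rw [matMom, matMom, matMom,
    ← finsum_add_distrib (matMom_support_finite μ P) (matMom_support_finite μ Q)]
  congr 1
  funext k
  rw [← add_mul]
  congr 1

lemma matMom_mapC_mul (μ : ℕ → Matrix (Fin 3) (Fin 3) ℂ)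
    (L : Matrix (Fin 3) (Fin 3) ℂ) (P : Matrix (Fin 3) (Fin 3) (Polynomial ℂ)) :
    matMom μ (L.map C * P) = L * matMom μ P := by
  rw [matMom, matMom]
  have h := AddMonoidHom.map_finsum (AddMonoidHom.mulLeft L) (matMom_support_finite μ P)
  simp only [AddMonoidHom.coe_mulLeft] at h
  rw [h]
  congr 1
  funext k
  rw [← Matrix.mul_assoc]
  congr 1
  ext i j
  simp [Matrix.mul_apply, Polynomial.finset_sum_coeff, Polynomial.coeff_C_mul]

lemma matMom_sum (μ : ℕ → Matrix (Fin 3) (Fin 3) ℂ) {ι : Type*} (s : Finset ι)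
    (f : ι → Matrix (Fin 3) (Fin 3) (Polynomial ℂ)) :
    matMom μ (∑ j ∈ s, f j) = ∑ j ∈ s, matMom μ (f j) := by
  induction s using Finset.cons_induction with
  | empty => simpa using matMom_zero μ
  | cons a s ha ih => rw [Finset.sum_cons, Finset.sum_cons, matMom_add, ih]

lemma MM_zero (μ1 μ2 : ℕ → Matrix (Fin 3) (Fin 3) ℂ) : MM μ1 μ2 0 = 0 := by
  have h : Matrix.toRows₁ (0 : Matrix (Fin 3 ⊕ Fin 3) (Fin 3) (Polynomial ℂ)) = 0 := rfl
  have h2 : Matrix.toRows₂ (0 : Matrix (Fin 3 ⊕ Fin 3) (Fin 3) (Polynomial ℂ)) = 0 := rfl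
  rw [MM, h, h2, matMom_zero, matMom_zero]
  simp [Matrix.fromBlocks_zero]

lemma MM_add (μ1 μ2 : ℕ → Matrix (Fin 3) (Fin 3) ℂ)
    (P Q : Matrix (Fin 3 ⊕ Fin 3) (Fin 3) (Polynomial ℂ)) :
    MM μ1 μ2 (P + Q) = MM μ1 μ2 P + MM μ1 μ2 Q := by
  have h1 : Matrix.toRows₁ (P + Q) = Matrix.toRows₁ P + Matrix.toRows₁ Q := rfl
  have h2 : Matrix.toRows₂ (P + Q) = Matrix.toRows₂ P + Matrix.toRows₂ Q := rfl
  rw [MM, MM, MM, h1, h2, matMom_add, matMom_add, matMom_add, matMom_add,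
    Matrix.fromBlocks_add]

lemma MM_sum (μ1 μ2 : ℕ → Matrix (Fin 3) (Fin 3) ℂ) {ι : Type*} (s : Finset ι)
    (f : ι → Matrix (Fin 3 ⊕ Fin 3) (Fin 3) (Polynomial ℂ)) :
    MM μ1 μ2 (∑ j ∈ s, f j) = ∑ j ∈ s, MM μ1 μ2 (f j) := by
  induction s using Finset.cons_induction with
  | empty => simpa using MM_zero μ1 μ2
  | cons a s ha ih => rw [Finset.sum_cons, Finset.sum_cons, MM_add, ih]

lemma MM_mapC_mul (μ1 μ2 : ℕ → Matrix (Fin 3) (Fin 3) ℂ)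
    (D : Matrix (Fin 3 ⊕ Fin 3) (Fin 3 ⊕ Fin 3) ℂ)
    (V : Matrix (Fin 3 ⊕ Fin 3) (Fin 3) (Polynomial ℂ)) :
    MM μ1 μ2 (D.map C * V) = D * MM μ1 μ2 V := by
  have hD : D = Matrix.fromBlocks (D.toBlocks₁₁) (D.toBlocks₁₂) (D.toBlocks₂₁) (D.toBlocks₂₂) :=
    (Matrix.fromBlocks_toBlocks D).symm
  have hV : V = Matrix.fromRows (Matrix.toRows₁ V) (Matrix.toRows₂ V) :=
    (Matrix.fromRows_toRows V).symm
  rw [hD, hV, Matrix.fromBlocks_map, Matrix.fromBlocks_mul_fromRows, MM, MM,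
    Matrix.toRows₁_fromRows, Matrix.toRows₂_fromRows, Matrix.toRows₁_fromRows,
    Matrix.toRows₂_fromRows, Matrix.fromBlocks_multiply]
  simp only [matMom_add, matMom_mapC_mul]

lemma sum_range_two_mul {α : Type*} [AddCommMonoid α] (f : ℕ → α) (k : ℕ) :
    ∑ m ∈ Finset.range (2 * k), f m = ∑ j ∈ Finset.range k, (f (2 * j) + f (2 * j + 1)) := by
  induction k with
  | zero => simp
  | succ k ih =>
    rw [show 2 * (k + 1) = (2 * k + 1) + 1 by ring, Finset.sum_range_succ,
      Finset.sum_range_succ, ih, Finset.sum_range_succ, add_assoc]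

lemma expand (W : ℕ → Matrix (Fin 3) (Fin 3) (Polynomial ℂ))
    (hdeg : ∀ m : ℕ, ∀ i j : Fin 3, (W m i j).natDegree ≤ m)
    (hlead : ∀ m : ℕ, IsUnit (Matrix.of fun i j : Fin 3 => (W m i j).coeff m)) :
    ∀ (d : ℕ) (P : Matrix (Fin 3) (Fin 3) (Polynomial ℂ)),
      (∀ (i j : Fin 3) (k : ℕ), d ≤ k → (P i j).coeff k = 0) →
      ∃ L : ℕ → Matrix (Fin 3) (Fin 3) ℂ,
        P = ∑ m ∈ Finset.range d, (L m).map C * W m := by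
  intro d
  induction d with
  | zero =>
    intro P hP
    refine ⟨fun _ => 0, ?_⟩
    rw [Finset.range_zero, Finset.sum_empty]
    ext i j n
    simp [hP i j n (Nat.zero_le n)]
  | succ d ih =>
    intro P hP
    set lead : Matrix (Fin 3) (Fin 3) ℂ := Matrix.of fun i j => (W d i j).coeff d with hleaddef
    have hld : IsUnit lead.det := (Matrix.isUnit_iff_isUnit_det _).mp (hlead d)
    set Pd : Matrix (Fin 3) (Fin 3) ℂ := Matrix.of fun i j => (P i j).coeff d with hPddef
    set Ld : Matrix (Fin 3) (Fin 3) ℂ := Pd * lead⁻¹ with hLddef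
    have key : Ld * lead = Pd := by
      rw [hLddef, Matrix.mul_assoc, Matrix.nonsing_inv_mul _ hld, Matrix.mul_one]
    have hQ : ∀ (i j : Fin 3) (k : ℕ), d ≤ k → ((P - (Ld).map C * W d) i j).coeff k = 0 := by
      intro i j k hk
      have h1 : ((Ld).map C * W d) i j = ∑ l : Fin 3, C (Ld i l) * W d l j := by
        simp [Matrix.mul_apply]
      simp only [Matrix.sub_apply, Polynomial.coeff_sub, h1, Polynomial.finset_sum_coeff,
        Polynomial.coeff_C_mul]
      rcases eq_or_lt_of_le hk with rfl | hlt
      · have h2 : ∑ l : Fin 3, Ld i l * (W d l j).coeff d = Pd i j := by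
          have := congrFun (congrFun key i) j
          simpa [Matrix.mul_apply, hleaddef] using this
        rw [h2]
        simp [hPddef]
      · rw [hP i j k hlt]
        have h3 : ∀ l : Fin 3, (W d l j).coeff k = 0 := fun l =>
          Polynomial.coeff_eq_zero_of_natDegree_lt (lt_of_le_of_lt (hdeg d l j) hlt)
        simp [h3]
    obtain ⟨L, hL⟩ := ih (P - (Ld).map C * W d) hQ
    refine ⟨fun m => if m = d then Ld else L m, ?_⟩
    rw [Finset.sum_range_succ]
    beta_reduce
    rw [if_pos rfl]
    have hcong : ∑ m ∈ Finset.range d, ((if m = d then Ld else L m)).map C * W m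
        = ∑ m ∈ Finset.range d, (L m).map C * W m :=
      Finset.sum_congr rfl fun m hm => by rw [if_neg (Finset.mem_range.mp hm).ne]
    rw [hcong, ← hL, sub_add_cancel]

lemma fromRows_sum {ι : Type*} (s : Finset ι)
    (f g : ι → Matrix (Fin 3) (Fin 3) (Polynomial ℂ)) :
    Matrix.fromRows (∑ j ∈ s, f j) (∑ j ∈ s, g j)
      = ∑ j ∈ s, Matrix.fromRows (f j) (g j) := by
  ext i c : 2
  cases i <;> simp [Matrix.fromRows_apply_inl, Matrix.fromRows_apply_inr, Matrix.sum_apply]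

lemma coeff_X_smul_zero (W : ℕ → Matrix (Fin 3) (Fin 3) (Polynomial ℂ))
    (hdeg : ∀ m : ℕ, ∀ i j : Fin 3, (W m i j).natDegree ≤ m)
    (m : ℕ) (i j : Fin 3) (k : ℕ) (hk : m + 2 ≤ k) :
    ((((X : ℂ[X]) • W m)) i j).coeff k = 0 := by
  have h1 : (((X : ℂ[X]) • W m) i j) = X * W m i j := rfl
  rw [h1]
  apply Polynomial.coeff_eq_zero_of_natDegree_lt
  calc (X * W m i j).natDegree ≤ (X : ℂ[X]).natDegree + (W m i j).natDegree :=
        Polynomial.natDegree_mul_le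
    _ ≤ 1 + m := by
        have := hdeg m i j
        simp [Polynomial.natDegree_X]
        omega
    _ < k := by omega

lemma stack_expand (W : ℕ → Matrix (Fin 3) (Fin 3) (Polynomial ℂ))
    (hdeg : ∀ m : ℕ, ∀ i j : Fin 3, (W m i j).natDegree ≤ m)
    (hlead : ∀ m : ℕ, IsUnit (Matrix.of fun i j : Fin 3 => (W m i j).coeff m)) (n : ℕ) :
    ∃ D : ℕ → Matrix (Fin 3 ⊕ Fin 3) (Fin 3 ⊕ Fin 3) ℂ,
      (X : ℂ[X]) • stack W n = ∑ j ∈ Finset.range (n + 2), (D j).map C * stack W j := by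
  obtain ⟨L1, hL1⟩ := expand W hdeg hlead (2 * (n + 2)) ((X : ℂ[X]) • W (2 * n))
    (fun i j k hk => coeff_X_smul_zero W hdeg (2 * n) i j k (by omega))
  obtain ⟨L2, hL2⟩ := expand W hdeg hlead (2 * (n + 2)) ((X : ℂ[X]) • W (2 * n + 1))
    (fun i j k hk => coeff_X_smul_zero W hdeg (2 * n + 1) i j k (by omega))
  refine ⟨fun j => Matrix.fromBlocks (L1 (2 * j)) (L1 (2 * j + 1)) (L2 (2 * j)) (L2 (2 * j + 1)),
    ?_⟩
  have hst : ∀ j, stack W j = Matrix.fromRows (W (2 * j)) (W (2 * j + 1)) := fun j => rfl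
  have hsm : (X : ℂ[X]) • stack W n
      = Matrix.fromRows ((X : ℂ[X]) • W (2 * n)) ((X : ℂ[X]) • W (2 * n + 1)) := by
    ext i c
    cases i <;> rfl
  rw [hsm, hL1, hL2, sum_range_two_mul, sum_range_two_mul, fromRows_sum]
  refine Finset.sum_congr rfl fun j _ => ?_
  rw [hst, Matrix.fromBlocks_map, Matrix.fromBlocks_mul_fromRows]

lemma cancel_right {M Ω : Matrix (Fin 3 ⊕ Fin 3) (Fin 3 ⊕ Fin 3) ℂ}
    (h : M * Ω = 0) (hu : IsUnit Ω) : M = 0 := by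
  have hdet := (Matrix.isUnit_iff_isUnit_det _).mp hu
  calc M = M * Ω * Ω⁻¹ := by rw [Matrix.mul_assoc, Matrix.mul_nonsing_inv _ hdet, Matrix.mul_one]
    _ = 0 := by rw [h, Matrix.zero_mul]

theorem stmt_18 (W : ℕ → Matrix (Fin 3) (Fin 3) (Polynomial ℂ))
    (hdeg : ∀ m : ℕ, ∀ i j : Fin 3, (W m i j).natDegree ≤ m)
    (hlead : ∀ m : ℕ, IsUnit (Matrix.of fun i j : Fin 3 => (W m i j).coeff m))
    (μ1 μ2 : ℕ → Matrix (Fin 3) (Fin 3) ℂ)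
    (horth : ∀ n k : ℕ, k < n → bigM μ1 μ2 W k n = 0)
    (hΩ : ∀ n : ℕ, IsUnit (bigM μ1 μ2 W n n)) :
    ∃ A B Cc : ℕ → Matrix (Fin 3 ⊕ Fin 3) (Fin 3 ⊕ Fin 3) ℂ,
      (∀ n : ℕ, (X : ℂ[X]) • stack W n =
        (A n).map C * stack W (n + 1) + (B n).map C * stack W n +
        (Cc n).map C * (if 1 ≤ n then stack W (n - 1) else 0)) ∧
      (∀ n : ℕ, 1 ≤ n →
        Cc n = bigM μ1 μ2 W n n * (bigM μ1 μ2 W (n - 1) (n - 1))⁻¹ ∧ IsUnit (Cc n)) := by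
  choose D hD using fun n => stack_expand W hdeg hlead n
  have hbig : ∀ k n, bigM μ1 μ2 W k n = MM μ1 μ2 ((X : ℂ[X]) ^ k • stack W n) := fun k n => rfl
  -- the central identity
  have star : ∀ n k, bigM μ1 μ2 W (k + 1) n
      = ∑ j ∈ Finset.range (n + 2), D n j * bigM μ1 μ2 W k j := by
    intro n k
    have h1 : (X : ℂ[X]) ^ (k + 1) • stack W n
        = (X : ℂ[X]) ^ k • ((X : ℂ[X]) • stack W n) := by
      rw [smul_smul, ← pow_succ]
    rw [hbig, h1, hD n, Finset.smul_sum]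
    have h2 : ∀ j, (X : ℂ[X]) ^ k • ((D n j).map C * stack W j)
        = (D n j).map C * ((X : ℂ[X]) ^ k • stack W j) := fun j => (Matrix.mul_smul _ _ _).symm
    simp only [h2]
    rw [MM_sum]
    refine Finset.sum_congr rfl fun j _ => ?_
    rw [MM_mapC_mul, ← hbig]
  -- vanishing of low coefficients
  have hvan : ∀ n k, k + 1 < n → D n k = 0 := by
    intro n k
    induction k using Nat.strong_induction_on with
    | _ k ih =>
      intro hk
      have h1 := star n k
      rw [horth n (k + 1) hk] at h1
      have h2 : ∑ j ∈ Finset.range (n + 2), D n j * bigM μ1 μ2 W k j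
          = D n k * bigM μ1 μ2 W k k := by
        apply Finset.sum_eq_single
        · intro j hj hne
          rcases lt_or_gt_of_ne hne with h | h
          · rw [ih j h (by omega), Matrix.zero_mul]
          · rw [horth j k h, Matrix.mul_zero]
        · intro h; exact absurd (Finset.mem_range.mpr (by omega)) h
      exact cancel_right (by rw [← h2, ← h1]) (hΩ k)
  -- value of the C coefficient
  have hC : ∀ m : ℕ, D (m + 1) m * bigM μ1 μ2 W m m = bigM μ1 μ2 W (m + 1) (m + 1) := by
    intro m
    have h1 := star (m + 1) m
    rw [h1]
    symm
    apply Finset.sum_eq_single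
    · intro j hj hne
      rcases lt_or_gt_of_ne hne with h | h
      · rw [hvan (m + 1) j (by omega), Matrix.zero_mul]
      · rw [horth j m h, Matrix.mul_zero]
    · intro h; exact absurd (Finset.mem_range.mpr (by omega)) h
  have hCval : ∀ m : ℕ, D (m + 1) m
      = bigM μ1 μ2 W (m + 1) (m + 1) * (bigM μ1 μ2 W m m)⁻¹ := by
    intro m
    have hdet := (Matrix.isUnit_iff_isUnit_det _).mp (hΩ m)
    calc D (m + 1) m = D (m + 1) m * bigM μ1 μ2 W m m * (bigM μ1 μ2 W m m)⁻¹ := by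
          rw [Matrix.mul_assoc, Matrix.mul_nonsing_inv _ hdet, Matrix.mul_one]
      _ = bigM μ1 μ2 W (m + 1) (m + 1) * (bigM μ1 μ2 W m m)⁻¹ := by rw [hC m]
  refine ⟨fun n => D n (n + 1), fun n => D n n, fun n => if n = 0 then 0 else D n (n - 1),
    ?_, ?_⟩
  · intro n
    rcases Nat.eq_zero_or_pos n with rfl | hn
    · rw [hD 0]
      norm_num
      rw [Finset.sum_range_succ, Finset.sum_range_one]
      abel
    · obtain ⟨m, rfl⟩ : ∃ m, n = m + 1 := ⟨n - 1, by omega⟩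
      rw [hD (m + 1)]
      beta_reduce
      rw [if_pos (show (1:ℕ) ≤ m + 1 by omega), if_neg (by omega : ¬ m + 1 = 0)]
      have e1 : m + 1 + 2 = (m + 2) + 1 := by ring
      rw [e1, Finset.sum_range_succ, Finset.sum_range_succ, Finset.sum_range_succ]
      have hz : ∑ j ∈ Finset.range m, (D (m + 1) j).map C * stack W j = 0 :=
        Finset.sum_eq_zero fun j hj => by
          rw [hvan (m + 1) j (by have := Finset.mem_range.mp hj; omega)]
          simp
      rw [hz, zero_add]
      have e2 : m + 1 - 1 = m := rfl
      rw [e2]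
      abel
  · intro n hn
    obtain ⟨m, rfl⟩ : ∃ m, n = m + 1 := ⟨n - 1, by omega⟩
    beta_reduce
    rw [if_neg (by omega : ¬ m + 1 = 0)]
    have e2 : m + 1 - 1 = m := rfl
    rw [e2]
    refine ⟨hCval m, ?_⟩
    rw [hCval m]
    rw [Matrix.isUnit_iff_isUnit_det, Matrix.det_mul]
    exact ((Matrix.isUnit_iff_isUnit_det _).mp (hΩ (m + 1))).mul
      (Matrix.isUnit_nonsing_inv_det _ ((Matrix.isUnit_iff_isUnit_det _).mp (hΩ m)))
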